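/- Let G be r₁-regular on n vertices with Laplacian eigenprojectors F_{θ_r}, and suppose e_a − e_b and e_c − e_d are Laplacian strongly cospectral in G with support S = {θ_0,…,θ_k}, θ_0 ∈ Λ⁺. Let H be r₂-regular on m vertices admitting perfect state transfer between vertices w and z at minimum time τ with phase λ where λ is a primitive p-th root of unity, p even, λ^{p/2} = −1, and U_{A_H} satisfies the periodicity/PST behavior at integer multiples of τ as in Lemma on powers. If for each θ_r ∈ S, (θ_r − r₁)t is an odd multiple of τ, and θ_r ∈ Λ⁺ iff (θ_0 t − θ_r t)/τ ≡ 0 (mod p) while θ_r ∈ Λ⁻ iff (θ_0 t − θ_r t)/τ ≡ p/2 (mod p), then U_{L_{G×H}}(t) ((e_a − e_b) ⊗ e_w) = e^{−i t r₁ r₂} λ^{k₀} ((e_c − e_d) ⊗ e_z) for the odd integer k₀ with (θ_0 − r₁)t = k₀τ; i.e. G × H has Laplacian perfect pair state transfer between (e_a − e_b) ⊗ e_w and (e_c − e_d) ⊗ e_z at time t. -/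

import Mathlib

open Matrix Complex Kronecker

/-- transition matrix `U_M(t) = exp(-itM)` -/
noncomputable def U {V : Type*} [Fintype V] [DecidableEq V] (M : Matrix V V ℂ) (t : ℝ) :
    Matrix V V ℂ :=
  NormedSpace.exp ((-(Complex.I * (t : ℂ))) • M)

/-- standard basis vector -/
noncomputable def e {V : Type*} [DecidableEq V] (v : V) : V → ℂ := Pi.single v 1

/-- Kronecker product of vectors -/
def vecKron {α β : Type*} (u : α → ℂ) (v : β → ℂ) : α × β → ℂ := fun p => u p.1 * v p.2

section Aux

variable {α β : Type*}

lemma vecKron_smul_left (c : ℂ) (u : α → ℂ) (v : β → ℂ) :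
    vecKron (c • u) v = c • vecKron u v := by
  funext x; simp [vecKron, mul_assoc]

lemma vecKron_smul_right (c : ℂ) (u : α → ℂ) (v : β → ℂ) :
    vecKron u (c • v) = c • vecKron u v := by
  funext x; simp [vecKron]; ring

lemma vecKron_zero_left (v : β → ℂ) : vecKron (0 : α → ℂ) v = 0 := by
  funext x; simp [vecKron]

lemma vecKron_add_right (u : α → ℂ) (v w : β → ℂ) :
    vecKron u (v + w) = vecKron u v + vecKron u w := by
  funext x; simp [vecKron, mul_add]

lemma vecKron_sub_right (u : α → ℂ) (v w : β → ℂ) :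
    vecKron u (v - w) = vecKron u v - vecKron u w := by
  funext x; simp [vecKron, mul_sub]

lemma vecKron_sum_left {ι : Type*} (s : Finset ι) (f : ι → α → ℂ) (v : β → ℂ) :
    vecKron (∑ i ∈ s, f i) v = ∑ i ∈ s, vecKron (f i) v := by
  funext x; simp [vecKron, Finset.sum_apply, Finset.sum_mul]

lemma kron_mulVec [Fintype α] [Fintype β] (A : Matrix α α ℂ) (B : Matrix β β ℂ)
    (u : α → ℂ) (v : β → ℂ) :
    (A ⊗ₖ B) *ᵥ vecKron u v = vecKron (A *ᵥ u) (B *ᵥ v) := by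
  funext x
  simp only [mulVec, dotProduct, vecKron, kroneckerMap_apply, Fintype.sum_prod_type]
  rw [Finset.sum_mul_sum]
  exact Finset.sum_congr rfl fun j _ => Finset.sum_congr rfl fun l _ => by ring

lemma exp_intertwine {V W : Type*} [Fintype V] [DecidableEq V] [Fintype W] [DecidableEq W]
    (M : Matrix V V ℂ) (N : Matrix W W ℂ) (T : (W → ℂ) →ₗ[ℂ] (V → ℂ))
    (h : ∀ v, M *ᵥ T v = T (N *ᵥ v)) (v : W → ℂ) :
    NormedSpace.exp M *ᵥ T v = T (NormedSpace.exp N *ᵥ v) := by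
  letI : SeminormedRing (Matrix V V ℂ) := Matrix.linftyOpSemiNormedRing
  letI : NormedRing (Matrix V V ℂ) := Matrix.linftyOpNormedRing
  letI : NormedAlgebra ℂ (Matrix V V ℂ) := Matrix.linftyOpNormedAlgebra
  letI : SeminormedRing (Matrix W W ℂ) := Matrix.linftyOpSemiNormedRing
  letI : NormedRing (Matrix W W ℂ) := Matrix.linftyOpNormedRing
  letI : NormedAlgebra ℂ (Matrix W W ℂ) := Matrix.linftyOpNormedAlgebra
  have hpow : ∀ k : ℕ, M ^ k *ᵥ T v = T (N ^ k *ᵥ v) := by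
    intro k
    induction k with
    | zero => simp
    | succ k ih =>
      rw [pow_succ', ← Matrix.mulVec_mulVec, ih, h, Matrix.mulVec_mulVec, ← pow_succ']
  have hM : Summable fun k : ℕ => (k.factorial⁻¹ : ℂ) • M ^ k :=
    NormedSpace.expSeries_summable' M
  have hN : Summable fun k : ℕ => (k.factorial⁻¹ : ℂ) • N ^ k :=
    NormedSpace.expSeries_summable' N
  let f₁ : Matrix V V ℂ →ₗ[ℂ] (V → ℂ) :=
    { toFun := fun X => X *ᵥ T v
      map_add' := fun X Y => Matrix.add_mulVec X Y (T v)
      map_smul' := fun c X => Matrix.smul_mulVec c X (T v) }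
  let f₂ : Matrix W W ℂ →ₗ[ℂ] (V → ℂ) :=
    { toFun := fun X => T (X *ᵥ v)
      map_add' := fun X Y => by simp [Matrix.add_mulVec]
      map_smul' := fun c X => by simp [Matrix.smul_mulVec] }
  let L₁ : Matrix V V ℂ →L[ℂ] (V → ℂ) := ⟨f₁, f₁.continuous_of_finiteDimensional⟩
  let L₂ : Matrix W W ℂ →L[ℂ] (V → ℂ) := ⟨f₂, f₂.continuous_of_finiteDimensional⟩
  have e1 : NormedSpace.exp M *ᵥ T v = L₁ (∑' k : ℕ, (k.factorial⁻¹ : ℂ) • M ^ k) := by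
    rw [NormedSpace.exp_eq_tsum ℂ]; rfl
  have e2 : T (NormedSpace.exp N *ᵥ v) = L₂ (∑' k : ℕ, (k.factorial⁻¹ : ℂ) • N ^ k) := by
    rw [NormedSpace.exp_eq_tsum ℂ]; rfl
  rw [e1, e2, L₁.map_tsum hM, L₂.map_tsum hN]
  congr 1
  funext k
  show ((k.factorial⁻¹ : ℂ) • M ^ k) *ᵥ T v = T (((k.factorial⁻¹ : ℂ) • N ^ k) *ᵥ v)
  rw [Matrix.smul_mulVec, hpow, Matrix.smul_mulVec, T.map_smul]

lemma exp_smul_one {W : Type*} [Fintype W] [DecidableEq W] (c : ℂ) :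
    NormedSpace.exp (c • (1 : Matrix W W ℂ)) = Complex.exp c • 1 := by
  have key : ∀ d : ℂ, d • (1 : Matrix W W ℂ) = Matrix.diagonal fun _ => d := by
    intro d
    ext i j
    by_cases h : i = j <;>
      simp [Matrix.smul_apply, Matrix.one_apply, Matrix.diagonal_apply, h]
  have h1 := key c
  have h2 := key (Complex.exp c)
  rw [h1, h2, Matrix.exp_diagonal]
  congr 1
  funext _
  rw [Pi.exp_def, ← Complex.exp_eq_exp_ℂ]


lemma mulVec_sum' {V W : Type*} [Fintype V] {ι : Type*} (s : Finset ι)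
    (M : Matrix W V ℂ) (f : ι → V → ℂ) :
    M *ᵥ (∑ i ∈ s, f i) = ∑ i ∈ s, M *ᵥ f i := by
  funext x
  simp only [Matrix.mulVec, dotProduct, Finset.sum_apply, Finset.mul_sum]
  rw [Finset.sum_comm]

lemma sum_mulVec' {V W : Type*} [Fintype V] {ι : Type*} (s : Finset ι)
    (M : ι → Matrix W V ℂ) (x : V → ℂ) :
    (∑ i ∈ s, M i) *ᵥ x = ∑ i ∈ s, M i *ᵥ x := by
  funext y
  simp only [Matrix.mulVec, dotProduct, Finset.sum_apply, Matrix.sum_apply, Finset.sum_mul]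
  rw [Finset.sum_comm]

end Aux

theorem stmt7 {n m r₁ r₂ : ℕ} (G : SimpleGraph (Fin n)) [DecidableRel G.Adj]
    (H : SimpleGraph (Fin m)) [DecidableRel H.Adj]
    (hG : G.IsRegularOfDegree r₁) (hH : H.IsRegularOfDegree r₂)
    {ι : Type*} [Fintype ι] [DecidableEq ι]
    (θ : ι → ℝ) (F : ι → Matrix (Fin n) (Fin n) ℂ)
    (hsum : ∑ i, F i = 1)
    (horth : ∀ i j, F i * F j = if i = j then F i else 0)
    (hspec : G.lapMatrix ℂ = ∑ i, ((θ i : ℝ) : ℂ) • F i)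
    (a b c d : Fin n) (w z : Fin m) (hab : a ≠ b) (hcd : c ≠ d)
    -- Laplacian strong cospectrality of the pair states e_a - e_b and e_c - e_d in G
    (hsc : ∀ i, F i *ᵥ (e a - e b) = F i *ᵥ (e c - e d) ∨
                F i *ᵥ (e a - e b) = -(F i *ᵥ (e c - e d)))
    -- H admits PST between w and z at minimum time τ with phase lam,
    -- a primitive p-th root of unity with p = 2q even and lam ^ (p/2) = -1
    (τ : ℝ) (lam : ℂ) (p q : ℕ) (hprim : IsPrimitiveRoot lam p)
    (hq : p = 2 * q) (hhalf : lam ^ q = -1)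
    (hPSTeven : ∀ k : ℤ, (U (H.adjMatrix ℂ) ((2 * (k : ℝ)) * τ)) *ᵥ e w
        = lam ^ (2 * k) • (e w : Fin m → ℂ))
    (hPSTodd : ∀ k : ℤ, (U (H.adjMatrix ℂ) ((2 * (k : ℝ) + 1) * τ)) *ᵥ e w
        = lam ^ (2 * k + 1) • (e z : Fin m → ℂ))
    (t : ℝ)
    -- θ₀ = θ i₀ belongs to Λ⁺ and to the support, with (θ₀ - r₁)t = k₀ τ, k₀ odd
    (i₀ : ι) (hi₀p : F i₀ *ᵥ (e a - e b) = F i₀ *ᵥ (e c - e d))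
    (hi₀s : F i₀ *ᵥ (e a - e b) ≠ 0)
    (k₀ : ℤ) (hk₀ : Odd k₀) (ht₀ : (θ i₀ - (r₁ : ℝ)) * t = (k₀ : ℝ) * τ)
    -- (a) for each θ_r in the support, (θ_r - r₁)t is an odd multiple of τ
    (hA : ∀ i, F i *ᵥ (e a - e b) ≠ 0 →
      ∃ k : ℤ, Odd k ∧ (θ i - (r₁ : ℝ)) * t = (k : ℝ) * τ)
    -- (b)(i) θ_r ∈ Λ⁺ iff (θ₀ t - θ_r t)/τ ≡ 0 (mod p)
    (hBp : ∀ i, F i *ᵥ (e a - e b) ≠ 0 →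
      (F i *ᵥ (e a - e b) = F i *ᵥ (e c - e d) ↔
        ∃ k : ℤ, θ i₀ * t - θ i * t = ((k * p : ℤ) : ℝ) * τ))
    -- (b)(ii) θ_r ∈ Λ⁻ iff (θ₀ t - θ_r t)/τ ≡ p/2 (mod p)
    (hBm : ∀ i, F i *ᵥ (e a - e b) ≠ 0 →
      (F i *ᵥ (e a - e b) = -(F i *ᵥ (e c - e d)) ↔
        ∃ k : ℤ, θ i₀ * t - θ i * t = ((k * p + q : ℤ) : ℝ) * τ)) :
    (U (((r₁ * r₂ : ℕ) : ℂ) • (1 : Matrix (Fin n × Fin m) (Fin n × Fin m) ℂ)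
          - (G.adjMatrix ℂ) ⊗ₖ (H.adjMatrix ℂ)) t) *ᵥ vecKron (e a - e b) (e w)
      = (Complex.exp (-(Complex.I * (t : ℂ) * ((r₁ * r₂ : ℕ) : ℂ))) * lam ^ k₀) •
          vecKron (e c - e d) (e z) := by
  classical
  have hq0 : q ≠ 0 := by rintro rfl; norm_num at hhalf
  have hp0 : p ≠ 0 := by omega
  have hlp : lam ^ p = 1 := hprim.pow_eq_one
  have hlam0 : lam ≠ 0 := by
    intro h; rw [h, zero_pow hp0] at hlp; exact zero_ne_one hlp
  have hzq : lam ^ (q : ℤ) = -1 := by rw [zpow_natCast, hhalf]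
  have hper : ∀ k : ℤ, lam ^ (k * (p : ℤ)) = 1 := fun k =>
    (hprim.zpow_eq_one_iff_dvd _).mpr ⟨k, mul_comm _ _⟩
  -- spectral facts
  have hdeg : G.degMatrix ℂ = (r₁ : ℂ) • 1 := by
    ext i j
    by_cases h : i = j
    · subst h
      simp [SimpleGraph.degMatrix, Matrix.diagonal_apply, Matrix.smul_apply,
        Matrix.one_apply, hG i]
    · simp [SimpleGraph.degMatrix, Matrix.diagonal_apply, Matrix.smul_apply,
        Matrix.one_apply, h]
  have hAeq : G.adjMatrix ℂ = (r₁ : ℂ) • 1 - G.lapMatrix ℂ := by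
    rw [SimpleGraph.lapMatrix, hdeg, sub_sub_cancel]
  have hLF : ∀ i, G.lapMatrix ℂ * F i = ((θ i : ℝ) : ℂ) • F i := by
    intro i
    rw [hspec, Finset.sum_mul, Finset.sum_eq_single i]
    · rw [smul_mul_assoc, horth, if_pos rfl]
    · intro j _ hji; rw [smul_mul_assoc, horth, if_neg hji, smul_zero]
    · intro h; exact absurd (Finset.mem_univ i) h
  have hAF : ∀ i, G.adjMatrix ℂ * F i = (((r₁ : ℝ) - θ i : ℝ) : ℂ) • F i := by
    intro i
    rw [hAeq, Matrix.sub_mul, hLF, smul_mul_assoc, one_mul, ← sub_smul]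
    congr 1
    push_cast
    ring
  set AG := G.adjMatrix ℂ with hAGdef
  set BH := H.adjMatrix ℂ with hBHdef
  set S : Matrix (Fin n × Fin m) (Fin n × Fin m) ℂ := ((r₁ * r₂ : ℕ) : ℂ) • 1 with hSdef
  set C : ℂ := Complex.exp (-(Complex.I * (t : ℂ) * ((r₁ * r₂ : ℕ) : ℂ))) with hCdef
  -- the per-eigenvalue computation
  have key : ∀ i, (U (S - AG ⊗ₖ BH) t) *ᵥ vecKron (F i *ᵥ (e a - e b)) (e w)
      = (C * lam ^ k₀) • vecKron (F i *ᵥ (e c - e d)) (e z) := by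
    intro i
    by_cases hi : F i *ᵥ (e a - e b) = 0
    · have hw : F i *ᵥ (e c - e d) = 0 := by
        rcases hsc i with h | h
        · rw [← h]; exact hi
        · rw [hi] at h; rw [← neg_eq_zero, ← h]
      rw [hi, hw, vecKron_zero_left, vecKron_zero_left, Matrix.mulVec_zero, smul_zero]
    · obtain ⟨ki, hkiodd, hki⟩ := hA i hi
      have hθdiff : θ i₀ * t - θ i * t = ((k₀ - ki : ℤ) : ℝ) * τ := by
        push_cast
        linear_combination ht₀ - hki
      -- the scalar relation
      have hscal : lam ^ ki • (F i *ᵥ (e a - e b)) = lam ^ k₀ • (F i *ᵥ (e c - e d)) := by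
        by_cases hτ : τ = 0
        · -- degenerate case : lam ^ 2 = 1
          have hU0 : (U BH (2 * ((1 : ℤ) : ℝ) * τ)) = 1 := by
            show NormedSpace.exp _ = 1
            rw [show (-(Complex.I * ((2 * ((1 : ℤ) : ℝ) * τ : ℝ) : ℂ))) • BH = 0 by
              rw [hτ]; norm_num, NormedSpace.exp_zero]
          have h1 := hPSTeven 1
          rw [hU0, Matrix.one_mulVec] at h1
          have h2 : lam ^ (2 : ℤ) = 1 := by
            have hww := congrFun h1 w
            simp [e, Pi.single_eq_same] at hww
            exact hww.symm
          have hodd : ∀ kk : ℤ, Odd kk → lam ^ kk = lam := by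
            rintro kk ⟨j, rfl⟩
            rw [zpow_add₀ hlam0, zpow_one, _root_.zpow_mul, h2, _root_.one_zpow, one_mul]
          have hplus : F i *ᵥ (e a - e b) = F i *ᵥ (e c - e d) := by
            apply (hBp i hi).mpr
            exact ⟨0, by rw [hθdiff, hτ]; push_cast; ring⟩
          rw [hodd ki hkiodd, hodd k₀ hk₀, hplus]
        · rcases hsc i with hpl | hmn
          · obtain ⟨k, hk⟩ := (hBp i hi).mp hpl
            have hcast : ((k₀ - ki : ℤ) : ℝ) = ((k * p : ℤ) : ℝ) :=
              mul_right_cancel₀ hτ (by rw [← hθdiff, hk])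
            have hintz : k₀ - ki = k * p := by exact_mod_cast hcast
            rw [sub_eq_iff_eq_add] at hintz
            have hlameq : lam ^ k₀ = lam ^ ki := by
              rw [hintz, zpow_add₀ hlam0, hper, one_mul]
            rw [hlameq, hpl]
          · obtain ⟨k, hk⟩ := (hBm i hi).mp hmn
            have hcast : ((k₀ - ki : ℤ) : ℝ) = ((k * p + q : ℤ) : ℝ) :=
              mul_right_cancel₀ hτ (by rw [← hθdiff, hk])
            have hintz : k₀ - ki = k * p + q := by exact_mod_cast hcast
            rw [sub_eq_iff_eq_add] at hintz
            have hlameq : lam ^ k₀ = -lam ^ ki := by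
              rw [hintz, zpow_add₀ hlam0, zpow_add₀ hlam0, hper, one_mul, hzq,
                neg_one_mul]
            rw [hmn, hlameq, smul_neg, neg_smul]
      -- the exponential computation
      set u := F i *ᵥ (e a - e b) with hudef
      set μ : ℂ := (((r₁ : ℝ) - θ i : ℝ) : ℂ) with hμdef
      have heig : AG *ᵥ u = μ • u := by
        rw [hudef, Matrix.mulVec_mulVec, hAF i, Matrix.smul_mulVec]
      set NH : Matrix (Fin m) (Fin m) ℂ :=
        (-(Complex.I * (t : ℂ))) • (((r₁ * r₂ : ℕ) : ℂ) • 1 - μ • BH) with hNHdef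
      let T : (Fin m → ℂ) →ₗ[ℂ] (Fin n × Fin m → ℂ) :=
        { toFun := fun v => vecKron u v
          map_add' := fun v v' => vecKron_add_right u v v'
          map_smul' := fun cc v => vecKron_smul_right cc u v }
      have hintw : ∀ v, ((-(Complex.I * (t : ℂ))) • (S - AG ⊗ₖ BH)) *ᵥ T v = T (NH *ᵥ v) := by
        intro v
        show ((-(Complex.I * (t : ℂ))) • (S - AG ⊗ₖ BH)) *ᵥ vecKron u v = vecKron u (NH *ᵥ v)
        have hl : ((-(Complex.I * (t : ℂ))) • (S - AG ⊗ₖ BH)) *ᵥ vecKron u v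
            = (-(Complex.I * (t : ℂ))) • (((r₁ * r₂ : ℕ) : ℂ) • vecKron u v
                - μ • vecKron u (BH *ᵥ v)) := by
          rw [Matrix.smul_mulVec, Matrix.sub_mulVec, kron_mulVec, heig, hSdef,
            Matrix.smul_mulVec, Matrix.one_mulVec, vecKron_smul_left]
        have hr : vecKron u (NH *ᵥ v)
            = (-(Complex.I * (t : ℂ))) • (((r₁ * r₂ : ℕ) : ℂ) • vecKron u v
                - μ • vecKron u (BH *ᵥ v)) := by
          rw [hNHdef, Matrix.smul_mulVec, Matrix.sub_mulVec, Matrix.smul_mulVec,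
            Matrix.one_mulVec, Matrix.smul_mulVec, vecKron_smul_right,
            vecKron_sub_right, vecKron_smul_right, vecKron_smul_right]
        rw [hl, hr]
      have hexp := exp_intertwine _ NH T hintw (e w)
      -- split NH
      have hkiℂ : ((θ i : ℝ) : ℂ) * (t : ℂ) - ((r₁ : ℕ) : ℂ) * (t : ℂ)
          = ((ki : ℤ) : ℂ) * ((τ : ℝ) : ℂ) := by
        have h := hki
        have h2 : ((((θ i - (r₁ : ℝ)) * t : ℝ)) : ℂ) = (((ki : ℝ) * τ : ℝ) : ℂ) := by
          exact_mod_cast congrArg Complex.ofReal h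
        push_cast at h2 ⊢
        linear_combination h2
      have hNsplit : NH = (-(Complex.I * (t : ℂ) * ((r₁ * r₂ : ℕ) : ℂ))) •
            (1 : Matrix (Fin m) (Fin m) ℂ)
          + (-(Complex.I * (((ki : ℝ) * τ : ℝ) : ℂ))) • BH := by
        rw [hNHdef, hμdef]
        match_scalars
        · push_cast; ring
        · push_cast
          linear_combination (-Complex.I) * hkiℂ
      have hcomm : Commute ((-(Complex.I * (t : ℂ) * ((r₁ * r₂ : ℕ) : ℂ))) •
            (1 : Matrix (Fin m) (Fin m) ℂ))
          ((-(Complex.I * (((ki : ℝ) * τ : ℝ) : ℂ))) • BH) :=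
        ((Commute.one_left _).smul_left _).smul_right _
      have hexpN : NormedSpace.exp NH = C • U BH ((ki : ℝ) * τ) := by
        rw [hNsplit, Matrix.exp_add_of_commute _ _ hcomm, exp_smul_one, smul_mul_assoc,
          one_mul]
        rfl
      have hPST : U BH ((ki : ℝ) * τ) *ᵥ e w = lam ^ ki • e z := by
        obtain ⟨j, hj⟩ := hkiodd
        have h1 : ((ki : ℝ)) = 2 * (j : ℝ) + 1 := by exact_mod_cast hj
        rw [show ((ki : ℝ) * τ) = (2 * (j : ℝ) + 1) * τ by rw [h1], hj]
        exact hPSTodd j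
      calc (U (S - AG ⊗ₖ BH) t) *ᵥ vecKron u (e w)
          = vecKron u (NormedSpace.exp NH *ᵥ e w) := hexp
        _ = vecKron u ((C • U BH ((ki : ℝ) * τ)) *ᵥ e w) := by rw [hexpN]
        _ = vecKron u (C • lam ^ ki • e z) := by
            rw [Matrix.smul_mulVec, hPST]
        _ = C • vecKron (lam ^ ki • u) (e z) := by
            rw [vecKron_smul_right, vecKron_smul_right, ← vecKron_smul_left]
        _ = C • vecKron (lam ^ k₀ • (F i *ᵥ (e c - e d))) (e z) := by rw [hscal]
        _ = (C * lam ^ k₀) • vecKron (F i *ᵥ (e c - e d)) (e z) := by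
            rw [vecKron_smul_left, smul_smul]
  -- assemble
  have hdab : (e a - e b : Fin n → ℂ) = ∑ i, F i *ᵥ (e a - e b) := by
    rw [← sum_mulVec', hsum, Matrix.one_mulVec]
  have hdcd : (e c - e d : Fin n → ℂ) = ∑ i, F i *ᵥ (e c - e d) := by
    rw [← sum_mulVec', hsum, Matrix.one_mulVec]
  calc (U (S - AG ⊗ₖ BH) t) *ᵥ vecKron (e a - e b) (e w)
      = ∑ i, (U (S - AG ⊗ₖ BH) t) *ᵥ vecKron (F i *ᵥ (e a - e b)) (e w) := by
        rw [← mulVec_sum', ← vecKron_sum_left, ← hdab]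
    _ = ∑ i, (C * lam ^ k₀) • vecKron (F i *ᵥ (e c - e d)) (e z) :=
        Finset.sum_congr rfl fun i _ => key i
    _ = (C * lam ^ k₀) • vecKron (e c - e d) (e z) := by
        rw [← Finset.smul_sum, ← vecKron_sum_left, ← hdcd]
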